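/- The following two optimal values coincide: sup over Hermitian PSD matrices S with tr(S) ≤ P of [ min over i = 1,…,K of det(I + H_sᴴ S H_s)/(1 + (h_iᴴ S h_i)/σ_i²) ] equals sup over vectors Γ = (Γ_1,…,Γ_K) with Γ_i ≥ 0 of [ min over i = 1,…,K of g(Γ_1,…,Γ_K)/(1 + Γ_i/σ_i²) ]. -/

import Mathlib

open Matrix ComplexOrder

/-- The (real) quadratic form `hᴴ S h`. -/
noncomputable def quadForm {N : ℕ} (h : Fin N → ℂ) (S : Matrix (Fin N) (Fin N) ℂ) : ℝ :=
  (star h ⬝ᵥ S.mulVec h).re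

/-- The (real) value `det(I + Hsᴴ S Hs)`. -/
noncomputable def detVal {N M : ℕ} (Hs : Matrix (Fin N) (Fin M) ℂ)
    (S : Matrix (Fin N) (Fin N) ℂ) : ℝ :=
  ((1 + Hs.conjTranspose * S * Hs).det).re

/-- `g(Γ₁,…,Γ_K)`: the optimal value of the CR spectrum sharing problem. -/
noncomputable def gFun {N M K : ℕ} (Hs : Matrix (Fin N) (Fin M) ℂ) (h : Fin K → Fin N → ℂ)
    (P : ℝ) (Γ : Fin K → ℝ) : ℝ :=
  sSup {x : ℝ | ∃ S : Matrix (Fin N) (Fin N) ℂ, S.PosSemidef ∧ S.trace.re ≤ P ∧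
    (∀ i, quadForm (h i) S ≤ Γ i) ∧ x = detVal Hs S}

section Helpers

open Finset

lemma trace_re_CHC {a b : ℕ} (C : Matrix (Fin a) (Fin b) ℂ) :
    (Cᴴ * C).trace.re = ∑ j, ∑ i, Complex.normSq (C i j) := by
  simp [Matrix.trace, Matrix.diag, Matrix.mul_apply, Complex.normSq_apply,
    Matrix.conjTranspose_apply, Complex.mul_re]

lemma frob_mul_le {a b c : ℕ} (C : Matrix (Fin a) (Fin b) ℂ) (H : Matrix (Fin b) (Fin c) ℂ) :
    ∑ k, ∑ i, Complex.normSq ((C * H) i k) ≤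
      (∑ j, ∑ i, Complex.normSq (C i j)) * (∑ k, ∑ j, Complex.normSq (H j k)) := by
  have key : ∀ i k, Complex.normSq ((C * H) i k) ≤
      (∑ j, Complex.normSq (C i j)) * (∑ j, Complex.normSq (H j k)) := by
    intro i k
    have h1 : ‖(C * H) i k‖ ≤ ∑ j, ‖C i j‖ * ‖H j k‖ := by
      rw [Matrix.mul_apply]
      exact (norm_sum_le _ _).trans (le_of_eq (by simp [norm_mul]))
    have h2 := Finset.sum_mul_sq_le_sq_mul_sq Finset.univ
      (fun j => ‖C i j‖) (fun j => ‖H j k‖)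
    calc Complex.normSq ((C * H) i k) = (‖(C * H) i k‖) ^ 2 := by
          rw [Complex.sq_norm]
      _ ≤ (∑ j, ‖C i j‖ * ‖H j k‖) ^ 2 := by
          apply pow_le_pow_left₀ (norm_nonneg _) h1
      _ ≤ (∑ j, ‖C i j‖ ^ 2) * (∑ j, ‖H j k‖ ^ 2) := h2
      _ = (∑ j, Complex.normSq (C i j)) * (∑ j, Complex.normSq (H j k)) := by
          simp [Complex.sq_norm]
  calc ∑ k, ∑ i, Complex.normSq ((C * H) i k)
      ≤ ∑ k, ∑ i, (∑ j, Complex.normSq (C i j)) * (∑ j, Complex.normSq (H j k)) := by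
        apply Finset.sum_le_sum; intro k _; apply Finset.sum_le_sum; intro i _; exact key i k
    _ = (∑ i, ∑ j, Complex.normSq (C i j)) * (∑ k, ∑ j, Complex.normSq (H j k)) := by
        rw [Finset.sum_comm (s := Finset.univ) (t := Finset.univ)]
        rw [Finset.sum_mul]
        congr 1; ext k
        rw [Finset.mul_sum]
    _ = (∑ j, ∑ i, Complex.normSq (C i j)) * (∑ k, ∑ j, Complex.normSq (H j k)) := by
        rw [Finset.sum_comm]

lemma trace_eq_sum_eigen {n : ℕ} {A : Matrix (Fin n) (Fin n) ℂ} (hA : A.IsHermitian) :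
    A.trace.re = ∑ i, hA.eigenvalues i := by
  have h1 : A.trace = ∑ i, (hA.eigenvalues i : ℂ) := by
    conv_lhs => rw [hA.spectral_theorem]
    rw [Unitary.conjStarAlgAut_apply, Matrix.trace_mul_cycle, Unitary.coe_star_mul_self, Matrix.one_mul,
      Matrix.trace_diagonal]
    simp
  rw [h1]
  norm_cast

lemma prod_eigen_re {n : ℕ} {A : Matrix (Fin n) (Fin n) ℂ} (hA : A.IsHermitian) :
    A.det.re = ∏ i, hA.eigenvalues i := by
  rw [hA.det_eq_prod_eigenvalues]
  norm_cast

lemma psd_det_re_nonneg {n : ℕ} {A : Matrix (Fin n) (Fin n) ℂ} (hA : A.PosSemidef) :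
    0 ≤ A.det.re := by
  rw [prod_eigen_re hA.1]
  exact Finset.prod_nonneg fun i _ => hA.eigenvalues_nonneg i

lemma psd_det_re_le {n : ℕ} {A : Matrix (Fin n) (Fin n) ℂ} (hA : A.PosSemidef) :
    A.det.re ≤ A.trace.re ^ n := by
  rw [prod_eigen_re hA.1, trace_eq_sum_eigen hA.1]
  calc ∏ i, hA.1.eigenvalues i ≤ ∏ _i : Fin n, ∑ j, hA.1.eigenvalues j := by
        apply Finset.prod_le_prod (fun i _ => hA.eigenvalues_nonneg i)
        intro i _
        exact Finset.single_le_sum (fun j _ => hA.eigenvalues_nonneg j) (Finset.mem_univ i)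
    _ = (∑ j, hA.1.eigenvalues j) ^ n := by
        rw [Finset.prod_const, Finset.card_univ, Fintype.card_fin]

lemma quadForm_nonneg {N : ℕ} {S : Matrix (Fin N) (Fin N) ℂ} (hS : S.PosSemidef)
    (x : Fin N → ℂ) : 0 ≤ quadForm x S :=
  hS.re_dotProduct_nonneg x

lemma detVal_nonneg {N M : ℕ} (Hs : Matrix (Fin N) (Fin M) ℂ) {S : Matrix (Fin N) (Fin N) ℂ}
    (hS : S.PosSemidef) : 0 ≤ detVal Hs S :=
  psd_det_re_nonneg (Matrix.PosSemidef.add .one (hS.conjTranspose_mul_mul_same Hs))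

lemma detVal_le_bound {N M : ℕ} (Hs : Matrix (Fin N) (Fin M) ℂ) (P : ℝ)
    {S : Matrix (Fin N) (Fin N) ℂ} (hS : S.PosSemidef) (htr : S.trace.re ≤ P) :
    detVal Hs S ≤ (M + P * (∑ k, ∑ j, Complex.normSq (Hs j k))) ^ M := by
  obtain ⟨C, rfl⟩ : ∃ C : Matrix (Fin N) (Fin N) ℂ, S = Cᴴ * C := by
    open scoped MatrixOrder in exact CStarAlgebra.nonneg_iff_eq_star_mul_self.mp hS.nonneg
  have hD : Hs.conjTranspose * (Cᴴ * C) * Hs = (C * Hs)ᴴ * (C * Hs) := by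
    rw [Matrix.conjTranspose_mul]
    simp [Matrix.mul_assoc]
  rw [detVal, hD]
  have hA : (1 + (C * Hs)ᴴ * (C * Hs)).PosSemidef :=
    Matrix.PosSemidef.add .one (Matrix.posSemidef_conjTranspose_mul_self _)
  have htrace : (1 + (C * Hs)ᴴ * (C * Hs)).trace.re =
      M + ∑ k, ∑ i, Complex.normSq ((C * Hs) i k) := by
    rw [Matrix.trace_add, Complex.add_re, Matrix.trace_one, trace_re_CHC]
    simp
  have hb : (1 + (C * Hs)ᴴ * (C * Hs)).trace.re ≤
      M + P * (∑ k, ∑ j, Complex.normSq (Hs j k)) := by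
    rw [htrace]
    have h1 := frob_mul_le C Hs
    have hC : (∑ j, ∑ i, Complex.normSq (C i j)) ≤ P := by
      rw [← trace_re_CHC]; exact htr
    have hHs : 0 ≤ ∑ k, ∑ j, Complex.normSq (Hs j k) :=
      Finset.sum_nonneg fun k _ => Finset.sum_nonneg fun j _ => Complex.normSq_nonneg _
    have h2 := h1.trans (mul_le_mul_of_nonneg_right hC hHs)
    linarith
  calc ((1 + (C * Hs)ᴴ * (C * Hs)).det).re ≤ (1 + (C * Hs)ᴴ * (C * Hs)).trace.re ^ M :=
        psd_det_re_le hA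
    _ ≤ (M + P * (∑ k, ∑ j, Complex.normSq (Hs j k))) ^ M := by
        apply pow_le_pow_left₀ _ hb
        rw [htrace]
        have : 0 ≤ ∑ k, ∑ i, Complex.normSq ((C * Hs) i k) :=
          Finset.sum_nonneg fun k _ => Finset.sum_nonneg fun i _ => Complex.normSq_nonneg _
        positivity

lemma quadForm_zero {N : ℕ} (x : Fin N → ℂ) : quadForm x (0 : Matrix (Fin N) (Fin N) ℂ) = 0 := by
  simp [quadForm]

lemma detVal_zero {N M : ℕ} (Hs : Matrix (Fin N) (Fin M) ℂ) :
    detVal Hs (0 : Matrix (Fin N) (Fin N) ℂ) = 1 := by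
  simp [detVal]

end Helpers

theorem stmt_1 (N M K : ℕ) [NeZero K] (hN : 0 < N) (hM : 0 < M)
    (P : ℝ) (hP : 0 < P) (σ : Fin K → ℝ) (hσ : ∀ i, 0 < σ i)
    (Hs : Matrix (Fin N) (Fin M) ℂ) (h : Fin K → Fin N → ℂ) :
    sSup {v : ℝ | ∃ S : Matrix (Fin N) (Fin N) ℂ, S.PosSemidef ∧ S.trace.re ≤ P ∧
        v = ⨅ i : Fin K, detVal Hs S / (1 + quadForm (h i) S / (σ i) ^ 2)} =
    sSup {v : ℝ | ∃ Γ : Fin K → ℝ, (∀ i, 0 ≤ Γ i) ∧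
        v = ⨅ i : Fin K, gFun Hs h P Γ / (1 + Γ i / (σ i) ^ 2)} := by
  classical
  have hKne : Nonempty (Fin K) := ⟨⟨0, Nat.pos_of_ne_zero (NeZero.ne K)⟩⟩
  set Cb : ℝ := (M + P * (∑ k, ∑ j, Complex.normSq (Hs j k))) ^ M with hCbdef
  have hσ2 : ∀ i, (0:ℝ) < σ i ^ 2 := fun i => pow_pos (hσ i) 2
  have hd1 : ∀ (Γ : Fin K → ℝ) (i : Fin K), 0 ≤ Γ i → (1:ℝ) ≤ 1 + Γ i / σ i ^ 2 :=
    fun Γ i hi => le_add_of_nonneg_right (div_nonneg hi (hσ2 i).le)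
  have hd0 : ∀ (Γ : Fin K → ℝ) (i : Fin K), 0 ≤ Γ i → (0:ℝ) < 1 + Γ i / σ i ^ 2 :=
    fun Γ i hi => lt_of_lt_of_le one_pos (hd1 Γ i hi)
  -- the feasible set defining `gFun`
  set gset : (Fin K → ℝ) → Set ℝ := fun Γ =>
    {x : ℝ | ∃ S : Matrix (Fin N) (Fin N) ℂ, S.PosSemidef ∧ S.trace.re ≤ P ∧
      (∀ i, quadForm (h i) S ≤ Γ i) ∧ x = detVal Hs S} with hgsetdef
  have hgFun : ∀ Γ, gFun Hs h P Γ = sSup (gset Γ) := fun Γ => rfl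
  have hgset_ne : ∀ (Γ : Fin K → ℝ), (∀ i, 0 ≤ Γ i) → (1:ℝ) ∈ gset Γ := by
    intro Γ hΓ
    exact ⟨0, .zero, by simpa using hP.le, fun i => by simpa [quadForm_zero] using hΓ i,
      (detVal_zero Hs).symm⟩
  have hgset_bdd : ∀ (Γ : Fin K → ℝ), ∀ x ∈ gset Γ, x ≤ Cb := by
    rintro Γ x ⟨S, hS, htr, _, rfl⟩
    exact detVal_le_bound Hs P hS htr
  have hg_le : ∀ (Γ : Fin K → ℝ), (∀ i, 0 ≤ Γ i) → gFun Hs h P Γ ≤ Cb := by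
    intro Γ hΓ
    rw [hgFun]
    exact csSup_le ⟨1, hgset_ne Γ hΓ⟩ (hgset_bdd Γ)
  have hg_nonneg : ∀ (Γ : Fin K → ℝ), (∀ i, 0 ≤ Γ i) → 0 ≤ gFun Hs h P Γ := by
    intro Γ hΓ
    rw [hgFun]
    exact le_trans zero_le_one (le_csSup ⟨Cb, hgset_bdd Γ⟩ (hgset_ne Γ hΓ))
  have hg_ge : ∀ (Γ : Fin K → ℝ) (S : Matrix (Fin N) (Fin N) ℂ), S.PosSemidef →
      S.trace.re ≤ P → (∀ i, quadForm (h i) S ≤ Γ i) → detVal Hs S ≤ gFun Hs h P Γ := by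
    intro Γ S hS htr hq
    rw [hgFun]
    exact le_csSup ⟨Cb, hgset_bdd Γ⟩ ⟨S, hS, htr, hq, rfl⟩
  -- the two sets in the statement
  set A : Set ℝ := {v : ℝ | ∃ S : Matrix (Fin N) (Fin N) ℂ, S.PosSemidef ∧ S.trace.re ≤ P ∧
      v = ⨅ i : Fin K, detVal Hs S / (1 + quadForm (h i) S / (σ i) ^ 2)} with hAdef
  set B : Set ℝ := {v : ℝ | ∃ Γ : Fin K → ℝ, (∀ i, 0 ≤ Γ i) ∧
      v = ⨅ i : Fin K, gFun Hs h P Γ / (1 + Γ i / (σ i) ^ 2)} with hBdef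
  have hA_ne : A.Nonempty := ⟨_, ⟨0, .zero, by simpa using hP.le, rfl⟩⟩
  have hB_ne : B.Nonempty := ⟨_, ⟨fun _ => 0, fun i => le_refl 0, rfl⟩⟩
  have hA_bdd : ∀ v ∈ A, v ≤ Cb := by
    rintro v ⟨S, hS, htr, rfl⟩
    calc (⨅ i : Fin K, detVal Hs S / (1 + quadForm (h i) S / (σ i) ^ 2))
        ≤ detVal Hs S / (1 + quadForm (h (Classical.arbitrary _)) S / (σ _) ^ 2) :=
          ciInf_le (Set.finite_range _).bddBelow _
      _ ≤ detVal Hs S := div_le_self (detVal_nonneg Hs hS)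
          (hd1 (fun i => quadForm (h i) S) _ (quadForm_nonneg hS _))
      _ ≤ Cb := detVal_le_bound Hs P hS htr
  have hB_bdd : ∀ v ∈ B, v ≤ Cb := by
    rintro v ⟨Γ, hΓ, rfl⟩
    calc (⨅ i : Fin K, gFun Hs h P Γ / (1 + Γ i / (σ i) ^ 2))
        ≤ gFun Hs h P Γ / (1 + Γ (Classical.arbitrary _) / (σ _) ^ 2) :=
          ciInf_le (Set.finite_range _).bddBelow _
      _ ≤ gFun Hs h P Γ := div_le_self (hg_nonneg Γ hΓ) (hd1 Γ _ (hΓ _))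
      _ ≤ Cb := hg_le Γ hΓ
  have hA_bddAbove : BddAbove A := ⟨Cb, fun v hv => hA_bdd v hv⟩
  have hB_bddAbove : BddAbove B := ⟨Cb, fun v hv => hB_bdd v hv⟩
  apply le_antisymm
  · -- sSup A ≤ sSup B
    apply csSup_le hA_ne
    rintro v ⟨S, hS, htr, rfl⟩
    have hΓ0 : ∀ i, 0 ≤ quadForm (h i) S := fun i => quadForm_nonneg hS (h i)
    refine le_trans (ciInf_mono (Set.finite_range _).bddBelow ?_)
      (le_csSup hB_bddAbove ⟨fun i => quadForm (h i) S, hΓ0, rfl⟩)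
    intro i
    exact (div_le_div_iff_of_pos_right (hd0 (fun j => quadForm (h j) S) i (hΓ0 i))).mpr
      (hg_ge _ S hS htr (fun j => le_refl _))
  · -- sSup B ≤ sSup A
    apply csSup_le hB_ne
    rintro v ⟨Γ, hΓ0, rfl⟩
    obtain ⟨j, hj⟩ := Finite.exists_max (fun i => Γ i / σ i ^ 2)
    have hdj : (0:ℝ) < 1 + Γ j / σ j ^ 2 := hd0 Γ j (hΓ0 j)
    refine le_trans (ciInf_le (Set.finite_range _).bddBelow j) ?_
    rw [div_le_iff₀ hdj, hgFun]
    apply csSup_le ⟨1, hgset_ne Γ hΓ0⟩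
    rintro x ⟨S, hS, htr, hq, rfl⟩
    rw [← div_le_iff₀ hdj]
    refine le_trans (le_ciInf fun i => ?_) (le_csSup hA_bddAbove ⟨S, hS, htr, rfl⟩)
    apply div_le_div_of_nonneg_left (detVal_nonneg Hs hS)
      (hd0 (fun j => quadForm (h j) S) i (quadForm_nonneg hS (h i)))
    calc 1 + quadForm (h i) S / σ i ^ 2 ≤ 1 + Γ i / σ i ^ 2 :=
          add_le_add_right (div_le_div_of_nonneg_right (hq i) (hσ2 i).le) 1
      _ ≤ 1 + Γ j / σ j ^ 2 := add_le_add_right (hj i) 1
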